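/- Let G be a group. A subset S ⊆ G extends to a right order of G if and only if for all a₁, …, aₙ ∈ G \ {e} there exist δ₁, …, δₙ ∈ {−1, 1} such that e ∉ ⟨S ∪ {a₁^{δ₁}, …, aₙ^{δₙ}}⟩, where ⟨·⟩ denotes the generated subsemigroup. -/

import Mathlib

open Subsemigroup

/-- The finitary sign condition for a set `T`. -/
def PhiCond {G : Type*} [Group G] (T : Set G) : Prop :=
  ∀ A : Finset G, (∀ x ∈ A, x ≠ 1) →
    ∃ f : G → ℤ, (∀ x, f x = -1 ∨ f x = 1) ∧
      (1 : G) ∉ Subsemigroup.closure (T ∪ (fun a => a ^ f a) '' (A : Set G))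

lemma aux_finitary {G : Type*} [Group G] (c : Set (Set G)) (hc : IsChain (· ⊆ ·) c)
    (hne : c.Nonempty) (X : Set G) {x : G}
    (hx : x ∈ Subsemigroup.closure (⋃₀ c ∪ X)) :
    ∃ T ∈ c, x ∈ Subsemigroup.closure (T ∪ X) := by
  induction hx using Subsemigroup.closure_induction with
  | mem y hy =>
    rcases hy with ⟨T, hT, hyT⟩ | hy
    · exact ⟨T, hT, Subsemigroup.subset_closure (Or.inl hyT)⟩
    · obtain ⟨T, hT⟩ := hne
      exact ⟨T, hT, Subsemigroup.subset_closure (Or.inr hy)⟩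
  | mul y z hy hz ihy ihz =>
    obtain ⟨T₁, hT₁, h₁⟩ := ihy
    obtain ⟨T₂, hT₂, h₂⟩ := ihz
    rcases hc.total hT₁ hT₂ with h | h
    · exact ⟨T₂, hT₂, mul_mem
        (Subsemigroup.closure_mono (Set.union_subset_union_left X h) h₁) h₂⟩
    · exact ⟨T₁, hT₁, mul_mem h₁
        (Subsemigroup.closure_mono (Set.union_subset_union_left X h) h₂)⟩

lemma aux_chain {G : Type*} [Group G] (c : Set (Set G)) (hc : IsChain (· ⊆ ·) c)
    (hne : c.Nonempty) (hΦ : ∀ T ∈ c, PhiCond T) : PhiCond (⋃₀ c) := by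
  classical
  intro A hA
  by_contra h
  push_neg at h
  obtain ⟨T₀, hT₀⟩ := hne
  have key : ∀ s : Finset G, ∃ T, T ∈ c ∧
      (((1:G) ∈ Subsemigroup.closure (⋃₀ c ∪ (s : Set G))) →
        (1:G) ∈ Subsemigroup.closure (T ∪ (s : Set G))) := by
    intro s
    by_cases hs : (1:G) ∈ Subsemigroup.closure (⋃₀ c ∪ (s : Set G))
    · obtain ⟨T, hT, h1⟩ := aux_finitary c hc ⟨T₀, hT₀⟩ (s : Set G) hs
      exact ⟨T, hT, fun _ => h1⟩
    · exact ⟨T₀, hT₀, fun h' => absurd h' hs⟩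
  choose g hg hg1 using key
  haveI : Nonempty ↥c := ⟨⟨T₀, hT₀⟩⟩
  have hdir : Directed (· ⊆ ·) (fun x : ↥c => (x : Set G)) :=
    hc.directedOn.directed_val
  set PS : Finset (Finset G) := (A ∪ A.image (·⁻¹)).powerset with hPS
  obtain ⟨z, hz⟩ := hdir.finset_le (PS.image (fun s => (⟨g s, hg s⟩ : ↥c)))
  obtain ⟨f, hf, hf1⟩ := hΦ z z.2 A hA
  set s_f : Finset G := A.image (fun a => a ^ f a) with hs_f
  have hmem : s_f ∈ PS := by
    rw [hPS, Finset.mem_powerset]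
    intro x hx
    simp only [hs_f, Finset.mem_image] at hx
    obtain ⟨a, ha, rfl⟩ := hx
    rcases hf a with h1 | h1
    · rw [h1, zpow_neg_one]
      exact Finset.mem_union_right _ (Finset.mem_image_of_mem _ ha)
    · rw [h1, zpow_one]
      exact Finset.mem_union_left _ ha
  have himg : (s_f : Set G) = (fun a => a ^ f a) '' (A : Set G) := by
    simp [hs_f, Finset.coe_image]
  have h1 : (1:G) ∈ Subsemigroup.closure (⋃₀ c ∪ (s_f : Set G)) := by
    rw [himg]; exact h f hf
  have h2 := hg1 s_f h1
  have hsub : g s_f ⊆ (z : Set G) :=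
    hz ⟨g s_f, hg s_f⟩ (Finset.mem_image_of_mem _ hmem)
  apply hf1
  rw [← himg]
  exact Subsemigroup.closure_mono (Set.union_subset_union_left _ hsub) h2

lemma aux_dicho {G : Type*} [Group G] (T : Set G) (hT : PhiCond T) {a : G}
    (ha : a ≠ 1) : PhiCond (T ∪ {a}) ∨ PhiCond (T ∪ {a⁻¹}) := by
  classical
  by_contra h
  push_neg at h
  obtain ⟨h₁, h₂⟩ := h
  unfold PhiCond at h₁ h₂
  push_neg at h₁ h₂
  obtain ⟨A, hA, hA1⟩ := h₁
  obtain ⟨B, hB, hB1⟩ := h₂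
  obtain ⟨f, hf, hf1⟩ := hT (insert a (A ∪ B)) (by
    intro x hx
    rcases Finset.mem_insert.mp hx with rfl | hx
    · exact ha
    · rcases Finset.mem_union.mp hx with hx | hx
      · exact hA x hx
      · exact hB x hx)
  have hsubA : ((A : Set G) : Set G) ⊆ ((insert a (A ∪ B) : Finset G) : Set G) := by
    intro x hx; simp_all
  have hsubB : ((B : Set G) : Set G) ⊆ ((insert a (A ∪ B) : Finset G) : Set G) := by
    intro x hx; simp_all
  have hamem : a ∈ ((insert a (A ∪ B) : Finset G) : Set G) := by simp
  rcases hf a with hfa | hfa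
  · apply hf1
    refine Subsemigroup.closure_mono ?_ (hB1 f hf)
    rintro x ((hx | hx) | hx)
    · exact Or.inl hx
    · have hx' : x = a⁻¹ := hx
      refine Or.inr ⟨a, hamem, ?_⟩
      show a ^ f a = x
      rw [hfa, zpow_neg_one, hx']
    · exact Or.inr (Set.image_mono hsubB hx)
  · apply hf1
    refine Subsemigroup.closure_mono ?_ (hA1 f hf)
    rintro x ((hx | hx) | hx)
    · exact Or.inl hx
    · have hx' : x = a := hx
      refine Or.inr ⟨a, hamem, ?_⟩
      show a ^ f a = x
      rw [hfa, zpow_one, hx']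
    · exact Or.inr (Set.image_mono hsubA hx)

theorem stmt14 {G : Type*} [Group G] (S : Set G) :
    (∃ P : Set G, (∀ a ∈ P, ∀ b ∈ P, a * b ∈ P) ∧ (1 : G) ∉ P ∧
      (∀ a : G, a ≠ 1 → a ∈ P ∨ a⁻¹ ∈ P) ∧ S ⊆ P) ↔
    (∀ (n : ℕ) (a : Fin n → G), (∀ i, a i ≠ 1) →
      ∃ δ : Fin n → ℤ, (∀ i, δ i = -1 ∨ δ i = 1) ∧
        (1 : G) ∉ Subsemigroup.closure (S ∪ Set.range fun i => a i ^ δ i)) := by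
  classical
  constructor
  · rintro ⟨P, hmul, h1, hdic, hSP⟩ n a ha
    refine ⟨fun i => if a i ∈ P then 1 else -1, fun i => by
      by_cases h : a i ∈ P <;> simp [h], ?_⟩
    intro hcl
    apply h1
    have hle : Subsemigroup.closure (S ∪ Set.range fun i => a i ^ (if a i ∈ P then (1:ℤ) else -1)) ≤
        ⟨P, fun hx hy => hmul _ hx _ hy⟩ := by
      rw [Subsemigroup.closure_le]
      rintro x (hx | ⟨i, rfl⟩)
      · exact hSP hx
      · by_cases h : a i ∈ P
        · simp only [if_pos h, zpow_one]; exact h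
        · have := (hdic _ (ha i)).resolve_left h
          simpa [h] using this
    exact hle hcl
  · intro hR
    have hΦS : PhiCond S := by
      intro A hA
      obtain ⟨δ, hδ, h1⟩ := hR A.card (fun i => ↑(A.equivFin.symm i))
        (fun i => hA _ (A.equivFin.symm i).2)
      refine ⟨fun x => if h : x ∈ A then δ (A.equivFin ⟨x, h⟩) else 1, fun x => ?_, ?_⟩
      · by_cases h : x ∈ A
        · simp only [dif_pos h]; exact hδ _
        · simp [h]
      · have heq : (fun x => x ^ (if h : x ∈ A then δ (A.equivFin ⟨x, h⟩) else 1)) '' (A : Set G)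
            = Set.range (fun i => (↑(A.equivFin.symm i) : G) ^ δ i) := by
          ext x
          constructor
          · rintro ⟨y, hy, rfl⟩
            have hy' : y ∈ A := hy
            refine ⟨A.equivFin ⟨y, hy'⟩, ?_⟩
            show ((A.equivFin.symm (A.equivFin ⟨y, hy'⟩) : A) : G) ^ δ (A.equivFin ⟨y, hy'⟩)
                = y ^ (if h : y ∈ A then δ (A.equivFin ⟨y, h⟩) else 1)
            rw [Equiv.symm_apply_apply, dif_pos hy']
          · rintro ⟨i, rfl⟩
            have hmem := (A.equivFin.symm i).2
            refine ⟨↑(A.equivFin.symm i), hmem, ?_⟩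
            simp only [hmem, dif_pos]
            rw [Subtype.coe_eta, Equiv.apply_symm_apply]
        rw [heq]
        exact h1
    obtain ⟨m, hSm, hmax⟩ := zorn_subset_nonempty {T : Set G | S ⊆ T ∧ PhiCond T}
      (fun c hcS hc hne => ⟨⋃₀ c, ⟨by
        obtain ⟨T, hT⟩ := hne
        exact (hcS hT).1.trans (Set.subset_sUnion_of_mem hT),
        aux_chain c hc hne (fun T hT => (hcS hT).2)⟩,
        fun s hs => Set.subset_sUnion_of_mem hs⟩)
      S ⟨subset_rfl, hΦS⟩
    have hΦm : PhiCond m := hmax.1.2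
    refine ⟨Subsemigroup.closure m, fun x hx y hy => mul_mem hx hy, ?_, ?_, ?_⟩
    · have := hΦm ∅ (by simp)
      obtain ⟨f, -, hf1⟩ := this
      simpa using hf1
    · intro x hx
      rcases aux_dicho m hΦm hx with hΦ | hΦ
      · left
        have : m ∪ {x} ⊆ m := hmax.2 ⟨hSm.trans Set.subset_union_left, hΦ⟩
          Set.subset_union_left
        exact Subsemigroup.subset_closure (this (Or.inr rfl))
      · right
        have : m ∪ {x⁻¹} ⊆ m := hmax.2 ⟨hSm.trans Set.subset_union_left, hΦ⟩
          Set.subset_union_left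
        exact Subsemigroup.subset_closure (this (Or.inr rfl))
    · exact fun x hx => Subsemigroup.subset_closure (hSm hx)
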